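/- Let M be a metric space with diameter at most D > 0, let (x_i, y_i)_{i=1}^n be pairs of distinct points of M, and let ε > 0. Let f, g : M → ℝ be 1-Lipschitz with f(y_1) = g(y_1) = 0, suppose f(x_i) − f(y_i) = d(x_i, y_i) and g(x_i) − g(y_i) > (1 − ε)·d(x_i, y_i) for every i ∈ {1,…,n}, and suppose that for every k ∈ {2,…,n} there is a finite sequence of pairwise distinct indices i_1, …, i_m ∈ {1,…,n} with i_1 = 1, containing k, such that d(x_{i_1},y_{i_1}) + ⋯ + d(x_{i_m},y_{i_m}) = d(x_{i_1},y_{i_2}) + d(x_{i_2},y_{i_3}) + ⋯ + d(x_{i_m},y_{i_1}). Then |f(u) − g(u)| ≤ n²·D·ε for every u ∈ {x_1, y_1, …, x_n, y_n}. -/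

import Mathlib

private lemma lip_sub' {M : Type*} [MetricSpace M] {h : M → ℝ}
    (hh : LipschitzWith 1 h) (a b : M) : h a - h b ≤ dist a b := by
  have h1 := hh.dist_le_mul a b
  rw [NNReal.coe_one, one_mul, Real.dist_eq] at h1
  exact le_trans (le_abs_self _) h1

private lemma cyc_sum' (m : ℕ) (hm : 1 ≤ m) (F : ℕ → ℝ) :
    ∑ r ∈ Finset.range m, F ((r + 1) % m) = ∑ r ∈ Finset.range m, F r := by
  obtain ⟨m', rfl⟩ : ∃ m', m = m' + 1 := ⟨m - 1, by omega⟩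
  rw [Finset.sum_range_succ, Finset.sum_range_succ' F m', Nat.mod_self]
  congr 1
  refine Finset.sum_congr rfl fun r hr => ?_
  have := Finset.mem_range.mp hr
  rw [Nat.mod_eq_of_lt (by omega)]

private lemma aux_cycle' {M : Type*} [MetricSpace M] (D : ℝ)
    (hdiam : ∀ p q : M, dist p q ≤ D)
    (n : ℕ) (x y : ℕ → M)
    (ε : ℝ) (hε : 0 < ε)
    (f g : M → ℝ) (hf : LipschitzWith 1 f) (hg : LipschitzWith 1 g)
    (hfy1 : f (y 1) = 0) (hgy1 : g (y 1) = 0)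
    (hfi : ∀ i, 1 ≤ i → i ≤ n → f (x i) - f (y i) = dist (x i) (y i))
    (hgi : ∀ i, 1 ≤ i → i ≤ n → (1 - ε) * dist (x i) (y i) < g (x i) - g (y i))
    (m : ℕ) (idx : ℕ → ℕ) (hm : 1 ≤ m) (hi0 : idx 0 = 1)
    (hrange : ∀ r < m, 1 ≤ idx r ∧ idx r ≤ n)
    (hsum : ∑ r ∈ Finset.range m, dist (x (idx r)) (y (idx r)) =
          ∑ r ∈ Finset.range m, dist (x (idx r)) (y (idx ((r + 1) % m)))) :
    ∀ r < m, |g (x (idx r)) - f (x (idx r))| ≤ ε * m * D ∧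
             |g (y (idx r)) - f (y (idx r))| ≤ ε * m * D := by
  have gsub := fun a b => lip_sub' hg a b
  have fsub := fun a b => lip_sub' hf a b
  set s : ℕ → ℝ :=
    fun r => dist (x (idx r)) (y (idx r)) - (g (x (idx r)) - g (y (idx r))) with hs_def
  set t : ℕ → ℝ :=
    fun r => dist (x (idx r)) (y (idx ((r + 1) % m)))
      - (g (x (idx r)) - g (y (idx ((r + 1) % m)))) with ht_def
  have hs0 : ∀ r, 0 ≤ s r := fun r => by
    have := gsub (x (idx r)) (y (idx r)); simp only [hs_def]; linarith
  have ht0 : ∀ r, 0 ≤ t r := fun r => by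
    have := gsub (x (idx r)) (y (idx ((r + 1) % m))); simp only [ht_def]; linarith
  have hcyc_g : ∑ r ∈ Finset.range m, g (y (idx ((r + 1) % m)))
      = ∑ r ∈ Finset.range m, g (y (idx r)) := cyc_sum' m hm (fun r => g (y (idx r)))
  have hcyc_f : ∑ r ∈ Finset.range m, f (y (idx ((r + 1) % m)))
      = ∑ r ∈ Finset.range m, f (y (idx r)) := cyc_sum' m hm (fun r => f (y (idx r)))
  have hsum_t : ∑ r ∈ Finset.range m, t r
      = ∑ r ∈ Finset.range m, dist (x (idx r)) (y (idx ((r + 1) % m)))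
        - ∑ r ∈ Finset.range m, g (x (idx r))
        + ∑ r ∈ Finset.range m, g (y (idx ((r + 1) % m))) := by
    rw [← Finset.sum_sub_distrib, ← Finset.sum_add_distrib]
    exact Finset.sum_congr rfl fun r _ => by simp only [ht_def]; ring
  have hsum_s : ∑ r ∈ Finset.range m, s r
      = ∑ r ∈ Finset.range m, dist (x (idx r)) (y (idx r))
        - ∑ r ∈ Finset.range m, g (x (idx r))
        + ∑ r ∈ Finset.range m, g (y (idx r)) := by
    rw [← Finset.sum_sub_distrib, ← Finset.sum_add_distrib]
    exact Finset.sum_congr rfl fun r _ => by simp only [hs_def]; ring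
  have hts : ∑ r ∈ Finset.range m, t r = ∑ r ∈ Finset.range m, s r := by
    rw [hsum_t, hsum_s, hcyc_g, hsum]
  -- bound on the total slack
  have hSd : ∑ r ∈ Finset.range m, s r
      ≤ ε * (∑ r ∈ Finset.range m, dist (x (idx r)) (y (idx r))) := by
    have h1 : (1 - ε) * ∑ r ∈ Finset.range m, dist (x (idx r)) (y (idx r))
        ≤ ∑ r ∈ Finset.range m, (g (x (idx r)) - g (y (idx r))) := by
      rw [Finset.mul_sum]
      exact Finset.sum_le_sum fun r hr =>
        le_of_lt (hgi _ (hrange r (Finset.mem_range.mp hr)).1 (hrange r (Finset.mem_range.mp hr)).2)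
    have h2 : ∑ r ∈ Finset.range m, s r
        = ∑ r ∈ Finset.range m, dist (x (idx r)) (y (idx r))
          - ∑ r ∈ Finset.range m, (g (x (idx r)) - g (y (idx r))) := by
      rw [← Finset.sum_sub_distrib]
    linarith
  have hdD : ∑ r ∈ Finset.range m, dist (x (idx r)) (y (idx r)) ≤ (m : ℝ) * D := by
    calc ∑ r ∈ Finset.range m, dist (x (idx r)) (y (idx r))
        ≤ ∑ _r ∈ Finset.range m, D := Finset.sum_le_sum fun r _ => hdiam _ _
      _ = (m : ℝ) * D := by rw [Finset.sum_const, Finset.card_range, nsmul_eq_mul]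
  have hS : ∑ r ∈ Finset.range m, s r ≤ ε * m * D := by
    calc ∑ r ∈ Finset.range m, s r
        ≤ ε * (∑ r ∈ Finset.range m, dist (x (idx r)) (y (idx r))) := hSd
      _ ≤ ε * ((m : ℝ) * D) := mul_le_mul_of_nonneg_left hdD (le_of_lt hε)
      _ = ε * m * D := by ring
  -- exactness of f along the cycle edges
  have hfT : ∀ r < m, f (x (idx r)) - f (y (idx ((r + 1) % m)))
      = dist (x (idx r)) (y (idx ((r + 1) % m))) := by
    have hnn : ∀ r ∈ Finset.range m,
        0 ≤ dist (x (idx r)) (y (idx ((r + 1) % m)))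
          - (f (x (idx r)) - f (y (idx ((r + 1) % m)))) := fun r _ => by
      have := fsub (x (idx r)) (y (idx ((r + 1) % m))); linarith
    have hzero : ∑ r ∈ Finset.range m,
        (dist (x (idx r)) (y (idx ((r + 1) % m)))
          - (f (x (idx r)) - f (y (idx ((r + 1) % m))))) = 0 := by
      rw [Finset.sum_sub_distrib]
      have e1 : ∑ r ∈ Finset.range m, (f (x (idx r)) - f (y (idx ((r + 1) % m))))
          = ∑ r ∈ Finset.range m, f (x (idx r))
            - ∑ r ∈ Finset.range m, f (y (idx ((r + 1) % m))) := Finset.sum_sub_distrib _ _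
      have e2 : ∑ r ∈ Finset.range m, (f (x (idx r)) - f (y (idx r)))
          = ∑ r ∈ Finset.range m, f (x (idx r))
            - ∑ r ∈ Finset.range m, f (y (idx r)) := Finset.sum_sub_distrib _ _
      have e3 : ∑ r ∈ Finset.range m, (f (x (idx r)) - f (y (idx r)))
          = ∑ r ∈ Finset.range m, dist (x (idx r)) (y (idx r)) :=
        Finset.sum_congr rfl fun r hr =>
          hfi _ (hrange r (Finset.mem_range.mp hr)).1 (hrange r (Finset.mem_range.mp hr)).2
      rw [e1, hcyc_f, ← hsum]
      linarith
    intro r hr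
    have := (Finset.sum_eq_zero_iff_of_nonneg hnn).mp hzero r (Finset.mem_range.mpr hr)
    linarith
  -- telescoping identity for g - f at the y points
  have hphi : ∀ r < m, g (y (idx r)) - f (y (idx r))
      = ∑ r' ∈ Finset.range r, (t r' - s r') := by
    intro r
    induction r with
    | zero => intro _; simp [hi0, hfy1, hgy1]
    | succ r ih =>
      intro hrm
      have hr : r < m := by omega
      have hprev := ih hr
      have hmod : (r + 1) % m = r + 1 := Nat.mod_eq_of_lt hrm
      have h1 := hfT r hr
      have h2 : f (x (idx r)) - f (y (idx r)) = dist (x (idx r)) (y (idx r)) :=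
        hfi _ (hrange r hr).1 (hrange r hr).2
      rw [Finset.sum_range_succ]
      have hts_def : t r - s r
          = dist (x (idx r)) (y (idx ((r + 1) % m))) - dist (x (idx r)) (y (idx r))
            + (g (y (idx ((r + 1) % m))) - g (y (idx r))) := by
        simp only [ht_def, hs_def]; ring
      rw [hmod] at hts_def h1
      linarith [hprev, hts_def, h1, h2]
  have hpart_t : ∀ r ≤ m, ∑ r' ∈ Finset.range r, t r' ≤ ∑ r' ∈ Finset.range m, t r' :=
    fun r hr => Finset.sum_le_sum_of_subset_of_nonneg (Finset.range_subset_range.mpr hr)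
      (fun r' _ _ => ht0 r')
  have hpart_s : ∀ r ≤ m, ∑ r' ∈ Finset.range r, s r' ≤ ∑ r' ∈ Finset.range m, s r' :=
    fun r hr => Finset.sum_le_sum_of_subset_of_nonneg (Finset.range_subset_range.mpr hr)
      (fun r' _ _ => hs0 r')
  have hneg : ∀ r : ℕ, -(∑ r' ∈ Finset.range r, s r') ≤ ∑ r' ∈ Finset.range r, (t r' - s r') := by
    intro r
    have h := Finset.sum_le_sum (fun r' (_ : r' ∈ Finset.range r) =>
      (by linarith [ht0 r'] : -s r' ≤ t r' - s r'))
    rw [Finset.sum_neg_distrib] at h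
    exact h
  have hpos : ∀ r : ℕ, ∑ r' ∈ Finset.range r, (t r' - s r') ≤ ∑ r' ∈ Finset.range r, t r' := by
    intro r
    exact Finset.sum_le_sum (fun r' _ => by linarith [hs0 r'])
  have hphi_bound : ∀ r < m, |g (y (idx r)) - f (y (idx r))| ≤ ∑ r' ∈ Finset.range m, s r' := by
    intro r hr
    rw [hphi r hr, abs_le]
    constructor
    · linarith [hneg r, hpart_s r (le_of_lt hr)]
    · linarith [hpos r, hpart_t r (le_of_lt hr), hts]
  intro r hr
  have hyb : |g (y (idx r)) - f (y (idx r))| ≤ ε * m * D := le_trans (hphi_bound r hr) hS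
  refine ⟨?_, hyb⟩
  have h2 : f (x (idx r)) - f (y (idx r)) = dist (x (idx r)) (y (idx r)) :=
    hfi _ (hrange r hr).1 (hrange r hr).2
  have hgx : g (x (idx r)) - f (x (idx r)) = (g (y (idx r)) - f (y (idx r))) - s r := by
    simp only [hs_def]; linarith
  rw [hgx, hphi r hr, abs_le]
  constructor
  · have h1 : -(∑ r' ∈ Finset.range (r + 1), s r')
        ≤ ∑ r' ∈ Finset.range r, (t r' - s r') - s r := by
      rw [Finset.sum_range_succ]
      linarith [hneg r]
    linarith [hpart_s (r + 1) (by omega : r + 1 ≤ m), hS]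
  · linarith [hpos r, hpart_t r (le_of_lt hr), hts, hS, hs0 r]

/-- The key quantitative estimate from the proof of Theorem 3.4 of the paper: near-norming
1-Lipschitz functions agree with the exactly norming one on all the points `x i`, `y i`,
up to an error `n² D ε`, provided the equality-cycle condition holds. -/
theorem stmt_9 {M : Type*} [MetricSpace M] (D : ℝ) (hD : 0 < D)
    (hdiam : ∀ p q : M, dist p q ≤ D)
    (n : ℕ) (x y : ℕ → M)
    (hxy : ∀ i, 1 ≤ i → i ≤ n → x i ≠ y i)
    (ε : ℝ) (hε : 0 < ε)
    (f g : M → ℝ) (hf : LipschitzWith 1 f) (hg : LipschitzWith 1 g)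
    (hfy1 : f (y 1) = 0) (hgy1 : g (y 1) = 0)
    (hfi : ∀ i, 1 ≤ i → i ≤ n → f (x i) - f (y i) = dist (x i) (y i))
    (hgi : ∀ i, 1 ≤ i → i ≤ n → (1 - ε) * dist (x i) (y i) < g (x i) - g (y i))
    (hcyc : ∀ k, 2 ≤ k → k ≤ n →
      ∃ (m : ℕ) (i : ℕ → ℕ), 1 ≤ m ∧ i 0 = 1 ∧
        (∀ r < m, 1 ≤ i r ∧ i r ≤ n) ∧
        (∀ r < m, ∀ s < m, i r = i s → r = s) ∧
        (∃ r < m, i r = k) ∧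
        ∑ r ∈ Finset.range m, dist (x (i r)) (y (i r)) =
          ∑ r ∈ Finset.range m, dist (x (i r)) (y (i ((r + 1) % m)))) :
    ∀ u : M, (∃ i, 1 ≤ i ∧ i ≤ n ∧ (u = x i ∨ u = y i)) →
      |f u - g u| ≤ (n : ℝ) ^ 2 * D * ε := by
  rintro u ⟨k, hk1, hkn, hu⟩
  have key : ∃ (m : ℕ) (idx : ℕ → ℕ), 1 ≤ m ∧ idx 0 = 1 ∧
      (∀ r < m, 1 ≤ idx r ∧ idx r ≤ n) ∧
      (∀ r < m, ∀ s < m, idx r = idx s → r = s) ∧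
      (∃ r < m, idx r = k) ∧
      ∑ r ∈ Finset.range m, dist (x (idx r)) (y (idx r)) =
        ∑ r ∈ Finset.range m, dist (x (idx r)) (y (idx ((r + 1) % m))) := by
    rcases Nat.lt_or_ge k 2 with h | h
    · have hk : k = 1 := by omega
      subst hk
      refine ⟨1, fun _ => 1, le_refl 1, rfl, fun r _ => ⟨le_refl 1, hkn⟩,
        fun r hr s hs _ => by omega, ⟨0, by omega, rfl⟩, ?_⟩
      simp
    · exact hcyc k h hkn
  obtain ⟨m, idx, hm, hi0, hrange, hinj, ⟨r, hrm, hrk⟩, hsum⟩ := key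
  have hmn : m ≤ n := by
    have hmaps : ∀ a ∈ Finset.range m, idx a ∈ Finset.Icc 1 n := fun a ha => by
      have := hrange a (Finset.mem_range.mp ha)
      exact Finset.mem_Icc.mpr ⟨this.1, this.2⟩
    have hinj' : Set.InjOn idx ↑(Finset.range m) := fun a ha b hb hab =>
      hinj a (Finset.mem_range.mp (Finset.mem_coe.mp ha)) b
        (Finset.mem_range.mp (Finset.mem_coe.mp hb)) hab
    have h := Finset.card_le_card_of_injOn idx hmaps hinj'
    simpa [Nat.card_Icc] using h
  have haux := aux_cycle' D hdiam n x y ε hε f g hf hg hfy1 hgy1 hfi hgi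
    m idx hm hi0 hrange hsum r hrm
  have hbound : ε * m * D ≤ (n : ℝ) ^ 2 * D * ε := by
    have h1 : (m : ℝ) ≤ (n : ℝ) ^ 2 := by
      exact_mod_cast le_trans hmn (Nat.le_self_pow two_ne_zero n)
    have h2 : ε * (m : ℝ) * D ≤ ε * (n : ℝ) ^ 2 * D :=
      mul_le_mul_of_nonneg_right (mul_le_mul_of_nonneg_left h1 hε.le) hD.le
    linarith [h2]
  rcases hu with rfl | rfl
  · rw [← hrk, abs_sub_comm]
    exact le_trans haux.1 hbound
  · rw [← hrk, abs_sub_comm]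
    exact le_trans haux.2 hbound
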